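/- Let G = ([m], E) be a graph and A_1, …, A_m events in a probability space such that G is a dependency graph (each A_i is independent of the collection {A_j : j ∉ Γ_i ∪ {i}}). Suppose B_1, …, B_m is another event set with dependency graph G, Pr(A_i) = Pr(B_i) for all i, and the B_i are exclusive, i.e., Pr(B_i ∩ B_j) = 0 whenever (i,j) ∈ E. Then Pr(⋃_i A_i) ≤ Pr(⋃_i B_i). -/

import Mathlib

open MeasureTheory ProbabilityTheory
open scoped Classical

/-- `G` is a dependency graph for the events `A`: each `A i` is independent of the
collection of events indexed by non-neighbors of `i` (other than `i` itself). -/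
def IsDependencyGraph {Ω : Type*} [MeasurableSpace Ω] (μ : Measure Ω)
    {m : ℕ} (G : SimpleGraph (Fin m)) (A : Fin m → Set Ω) : Prop :=
  ∀ i, Indep (MeasurableSpace.generateFrom {A i})
    (MeasurableSpace.generateFrom ((fun j => A j) '' {j | j ≠ i ∧ ¬ G.Adj i j})) μ

/-- Abstract Shearer-style induction over finsets. -/
lemma shearer_abstract {m : ℕ} (G : SimpleGraph (Fin m)) (a b : Finset (Fin m) → ℝ)
    (p : Fin m → ℝ) (hp : ∀ i, 0 ≤ p i)
    (ha0 : ∀ T, 0 ≤ a T) (hb0 : ∀ T, 0 ≤ b T)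
    (hbmono : ∀ M T : Finset (Fin m), M ⊆ T → b T ≤ b M)
    (hA : ∀ T : Finset (Fin m), ∀ i ∉ T,
      a T - p i * a (T.filter fun j => ¬ G.Adj i j) ≤ a (insert i T))
    (hB : ∀ T : Finset (Fin m), ∀ i ∉ T,
      b (insert i T) = b T - p i * b (T.filter fun j => ¬ G.Adj i j)) :
    ∀ T M : Finset (Fin m), M ⊆ T → b T * a M ≤ b M * a T := by
  intro T
  induction T using Finset.strongInduction with
  | _ T IH =>
    intro M hMT
    rcases eq_or_ne M T with rfl | hne
    · exact le_refl _
    · obtain ⟨i, hiT, hiM⟩ := Finset.exists_of_ssubset (lt_of_le_of_ne hMT hne)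
      set T₀ := T.erase i with hT₀def
      have hiT₀ : i ∉ T₀ := Finset.notMem_erase i T
      have hT : insert i T₀ = T := Finset.insert_erase hiT
      have hMT₀ : M ⊆ T₀ := Finset.subset_erase.2 ⟨hMT, hiM⟩
      have hT₀T : T₀ ⊂ T := Finset.erase_ssubset hiT
      set M' := T₀.filter (fun j => ¬ G.Adj i j) with hM'def
      have hD' : b T₀ * a M' ≤ b M' * a T₀ := IH T₀ hT₀T M' (Finset.filter_subset _ _)
      have hBi := hB T₀ i hiT₀
      have hAi := hA T₀ i hiT₀
      rw [hT] at hBi hAi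
      have hC : b T * a T₀ ≤ b T₀ * a T := by
        rw [hBi]
        nlinarith [mul_le_mul_of_nonneg_left hAi (hb0 T₀),
          mul_le_mul_of_nonneg_left hD' (hp i)]
      have hD₀ : b T₀ * a M ≤ b M * a T₀ := IH T₀ hT₀T M hMT₀
      have hbT : b T ≤ b T₀ := hbmono T₀ T (hT ▸ Finset.subset_insert i T₀)
      rcases (hb0 T₀).eq_or_lt with h0 | h0
      · have hbT0 : b T = 0 := le_antisymm (h0 ▸ hbT) (hb0 T)
        rw [hbT0, zero_mul]
        exact mul_nonneg (hb0 M) (ha0 T)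
      · have h1 : b T * (b T₀ * a M) ≤ b T * (b M * a T₀) :=
          mul_le_mul_of_nonneg_left hD₀ (hb0 T)
        have h2 : b M * (b T * a T₀) ≤ b M * (b T₀ * a T) :=
          mul_le_mul_of_nonneg_left hC (hb0 M)
        have h3 : b T₀ * (b T * a M) ≤ b T₀ * (b M * a T) := by nlinarith
        exact le_of_mul_le_mul_left h3 h0

/-- Independence of `A i` from intersections of complements of non-neighbors. -/
lemma indep_inter_compl {Ω : Type*} [MeasurableSpace Ω] (μ : Measure Ω)
    {m : ℕ} (G : SimpleGraph (Fin m)) (A : Fin m → Set Ω)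
    (hAdep : IsDependencyGraph μ G A) (i : Fin m) (S : Finset (Fin m))
    (hS : ∀ j ∈ S, j ≠ i ∧ ¬ G.Adj i j) :
    μ (A i ∩ ⋂ j ∈ S, (A j)ᶜ) = μ (A i) * μ (⋂ j ∈ S, (A j)ᶜ) := by
  have h := (Indep_iff _ _ μ).1 (hAdep i)
  refine h _ _ (MeasurableSpace.measurableSet_generateFrom rfl) ?_
  refine S.measurableSet_biInter fun j hj => MeasurableSet.compl ?_
  exact MeasurableSpace.measurableSet_generateFrom (Set.mem_image_of_mem _ (hS j hj))

lemma biInter_anti_finset {α β : Type*} (f : β → Set α) {M T : Finset β} (h : M ⊆ T) :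
    ⋂ j ∈ T, f j ⊆ ⋂ j ∈ M, f j := by
  intro ω hω
  simp only [Set.mem_iInter] at *
  exact fun j hj => hω j (h hj)

/-- For exclusive events, intersecting with complements of neighbors changes nothing. -/
lemma excl_inter_compl {Ω : Type*} [MeasurableSpace Ω] (μ : Measure Ω)
    {m : ℕ} (G : SimpleGraph (Fin m)) (B : Fin m → Set Ω)
    (hexcl : ∀ i j, G.Adj i j → μ (B i ∩ B j) = 0) (i : Fin m) (T : Finset (Fin m)) :
    μ (B i ∩ ⋂ j ∈ T, (B j)ᶜ)
      = μ (B i ∩ ⋂ j ∈ T.filter (fun j => ¬ G.Adj i j), (B j)ᶜ) := by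
  classical
  set M := T.filter (fun j => ¬ G.Adj i j) with hM
  refine le_antisymm
    (measure_mono (Set.inter_subset_inter_right _
      (biInter_anti_finset _ (Finset.filter_subset _ _)))) ?_
  set N : Set Ω := ⋃ j ∈ T.filter (fun j => G.Adj i j), (B i ∩ B j) with hN
  have hNnull : μ N = 0 := by
    refine le_antisymm ?_ zero_le
    refine le_trans (measure_biUnion_finset_le _ _) ?_
    have : ∀ j ∈ T.filter (fun j => G.Adj i j), μ (B i ∩ B j) = 0 := by
      intro j hj
      exact hexcl i j (Finset.mem_filter.1 hj).2
    rw [Finset.sum_congr rfl this]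
    simp
  have hsub : (B i ∩ ⋂ j ∈ M, (B j)ᶜ) ⊆ (B i ∩ ⋂ j ∈ T, (B j)ᶜ) ∪ N := by
    rintro ω ⟨hωi, hωM⟩
    by_cases hωT : ω ∈ ⋂ j ∈ T, (B j)ᶜ
    · exact Or.inl ⟨hωi, hωT⟩
    · simp only [Set.mem_iInter, Set.mem_compl_iff, not_forall] at hωT
      obtain ⟨j, hjT, hωj⟩ := hωT
      have hωj' : ω ∈ B j := not_not.1 hωj
      have hadj : G.Adj i j := by
        by_contra hna
        have hjM : j ∈ M := Finset.mem_filter.2 ⟨hjT, hna⟩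
        have := Set.mem_iInter₂.1 hωM j hjM
        exact this hωj'
      exact Or.inr (Set.mem_biUnion (Finset.mem_filter.2 ⟨hjT, hadj⟩) ⟨hωi, hωj'⟩)
  calc μ (B i ∩ ⋂ j ∈ M, (B j)ᶜ) ≤ μ ((B i ∩ ⋂ j ∈ T, (B j)ᶜ) ∪ N) := measure_mono hsub
    _ ≤ μ (B i ∩ ⋂ j ∈ T, (B j)ᶜ) + μ N := measure_union_le _ _
    _ = μ (B i ∩ ⋂ j ∈ T, (B j)ᶜ) := by rw [hNnull, add_zero]

theorem union_le_of_exclusive {Ω : Type*} [MeasurableSpace Ω] (μ : Measure Ω)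
    [IsProbabilityMeasure μ] {m : ℕ} (G : SimpleGraph (Fin m))
    (A B : Fin m → Set Ω)
    (hAm : ∀ i, MeasurableSet (A i)) (hBm : ∀ i, MeasurableSet (B i))
    (hAdep : IsDependencyGraph μ G A) (hBdep : IsDependencyGraph μ G B)
    (heq : ∀ i, μ (A i) = μ (B i))
    (hexcl : ∀ i j, G.Adj i j → μ (B i ∩ B j) = 0) :
    μ (⋃ i, A i) ≤ μ (⋃ i, B i) := by
  classical
  set p : Fin m → ℝ := fun i => (μ (A i)).toReal with hp_def
  set a : Finset (Fin m) → ℝ := fun T => (μ (⋂ j ∈ T, (A j)ᶜ)).toReal with ha_def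
  set b : Finset (Fin m) → ℝ := fun T => (μ (⋂ j ∈ T, (B j)ᶜ)).toReal with hb_def
  have hfin : ∀ s : Set Ω, μ s ≠ ⊤ := fun s => measure_ne_top μ s
  -- generic splitting fact
  have hsplit : ∀ (C : Fin m → Set Ω), (∀ i, MeasurableSet (C i)) →
      ∀ (T : Finset (Fin m)) (i : Fin m), i ∉ T →
      μ (⋂ j ∈ T, (C j)ᶜ)
        = μ (⋂ j ∈ insert i T, (C j)ᶜ) + μ (C i ∩ ⋂ j ∈ T, (C j)ᶜ) := by
    intro C hCm T i hiT
    have h1 := measure_inter_add_diff (μ := μ) (⋂ j ∈ T, (C j)ᶜ) (hCm i)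
    have h2 : (⋂ j ∈ T, (C j)ᶜ) \ C i = ⋂ j ∈ insert i T, (C j)ᶜ := by
      rw [Finset.set_biInter_insert, Set.diff_eq, Set.inter_comm]
    have h3 : (⋂ j ∈ T, (C j)ᶜ) ∩ C i = C i ∩ ⋂ j ∈ T, (C j)ᶜ := Set.inter_comm _ _
    rw [h2, h3] at h1
    rw [← h1, add_comm]
  -- the filtered set consists of non-neighbors distinct from i
  have hfilter : ∀ (T : Finset (Fin m)) (i : Fin m), i ∉ T →
      ∀ j ∈ T.filter (fun j => ¬ G.Adj i j), j ≠ i ∧ ¬ G.Adj i j := by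
    intro T i hiT j hj
    rcases Finset.mem_filter.1 hj with ⟨hjT, hna⟩
    exact ⟨fun h => hiT (h ▸ hjT), hna⟩
  have hp : ∀ i, 0 ≤ p i := fun i => ENNReal.toReal_nonneg
  have ha0 : ∀ T, 0 ≤ a T := fun T => ENNReal.toReal_nonneg
  have hb0 : ∀ T, 0 ≤ b T := fun T => ENNReal.toReal_nonneg
  have hbmono : ∀ M T : Finset (Fin m), M ⊆ T → b T ≤ b M := by
    intro M T hMT
    exact ENNReal.toReal_mono (hfin _)
      (measure_mono (biInter_anti_finset _ hMT))
  have hA' : ∀ T : Finset (Fin m), ∀ i ∉ T,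
      a T - p i * a (T.filter fun j => ¬ G.Adj i j) ≤ a (insert i T) := by
    intro T i hiT
    set M := T.filter (fun j => ¬ G.Adj i j) with hM
    have h1 := hsplit A hAm T i hiT
    have h2 : μ (A i ∩ ⋂ j ∈ T, (A j)ᶜ) ≤ μ (A i) * μ (⋂ j ∈ M, (A j)ᶜ) := by
      rw [← indep_inter_compl μ G A hAdep i M (hfilter T i hiT)]
      exact measure_mono (Set.inter_subset_inter_right _
        (biInter_anti_finset _ (Finset.filter_subset _ _)))
    have h3 : μ (⋂ j ∈ T, (A j)ᶜ)
        ≤ μ (⋂ j ∈ insert i T, (A j)ᶜ) + μ (A i) * μ (⋂ j ∈ M, (A j)ᶜ) := by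
      rw [h1]; exact add_le_add le_rfl h2
    have h4 := ENNReal.toReal_mono
      (by exact ENNReal.add_ne_top.2 ⟨hfin _, ENNReal.mul_ne_top (hfin _) (hfin _)⟩) h3
    rw [ENNReal.toReal_add (hfin _) (ENNReal.mul_ne_top (hfin _) (hfin _)),
      ENNReal.toReal_mul] at h4
    simp only [ha_def, hp_def, hM]
    linarith [h4]
  have hB' : ∀ T : Finset (Fin m), ∀ i ∉ T,
      b (insert i T) = b T - p i * b (T.filter fun j => ¬ G.Adj i j) := by
    intro T i hiT
    set M := T.filter (fun j => ¬ G.Adj i j) with hM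
    have h1 := hsplit B hBm T i hiT
    have h2 : μ (B i ∩ ⋂ j ∈ T, (B j)ᶜ) = μ (B i) * μ (⋂ j ∈ M, (B j)ᶜ) := by
      rw [excl_inter_compl μ G B hexcl i T]
      exact indep_inter_compl μ G B hBdep i M (hfilter T i hiT)
    rw [h2] at h1
    have h4 := congrArg ENNReal.toReal h1
    rw [ENNReal.toReal_add (hfin _) (ENNReal.mul_ne_top (hfin _) (hfin _)),
      ENNReal.toReal_mul] at h4
    have hpB : p i = (μ (B i)).toReal := by rw [hp_def]; simp [heq i]
    simp only [hb_def, hM]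
    rw [hpB]
    linarith [h4]
  have hmain := shearer_abstract G a b p hp ha0 hb0 hbmono hA' hB'
    Finset.univ ∅ (Finset.empty_subset _)
  have haemp : a ∅ = 1 := by simp [ha_def]
  have hbemp : b ∅ = 1 := by simp [hb_def]
  rw [haemp, hbemp, mul_one, one_mul] at hmain
  -- hmain : b univ ≤ a univ
  have hAc : μ (⋃ i, A i) + μ (⋂ j ∈ Finset.univ, (A j)ᶜ) = 1 := by
    have h := measure_add_measure_compl (μ := μ) (MeasurableSet.iUnion fun i => hAm i)
    rw [measure_univ] at h
    have : (⋃ i, A i)ᶜ = ⋂ j ∈ Finset.univ, (A j)ᶜ := by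
      simp [Set.compl_iUnion]
    rw [this] at h
    exact h
  have hBc : μ (⋃ i, B i) + μ (⋂ j ∈ Finset.univ, (B j)ᶜ) = 1 := by
    have h := measure_add_measure_compl (μ := μ) (MeasurableSet.iUnion fun i => hBm i)
    rw [measure_univ] at h
    have : (⋃ i, B i)ᶜ = ⋂ j ∈ Finset.univ, (B j)ᶜ := by
      simp [Set.compl_iUnion]
    rw [this] at h
    exact h
  have hAr := congrArg ENNReal.toReal hAc
  have hBr := congrArg ENNReal.toReal hBc
  rw [ENNReal.toReal_add (hfin _) (hfin _), ENNReal.toReal_one] at hAr hBr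
  rw [← ENNReal.toReal_le_toReal (hfin _) (hfin _)]
  have haU : a Finset.univ = (μ (⋂ j ∈ Finset.univ, (A j)ᶜ)).toReal := rfl
  have hbU : b Finset.univ = (μ (⋂ j ∈ Finset.univ, (B j)ᶜ)).toReal := rfl
  linarith [hmain, hAr, hBr]
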